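/- arXiv:1306.5911 — 5 statements merged into one kernel-verified Lean document; each statement's English description precedes it below -/
import Mathlib

section
/- The integral of sin²(x)/x² from 0 to infinity equals π/2. -/
open Real MeasureTheory Filter Set

/-- Laplace-type integral: for `x > 0`, `∫ t in Ioi 0, t * exp (-(x*t)) = 1/x²`,
via the antiderivative `-(exp (-(x*t)) * (x*t+1))/x²`. -/
lemma aux_hasDerivAt_A {x : ℝ} (hx : 0 < x) (t : ℝ) :
    HasDerivAt (fun t : ℝ => -(Real.exp (-(x*t)) * (x*t+1)) / x^2)
      (t * Real.exp (-(x*t))) t := by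
  have h1 : HasDerivAt (fun t : ℝ => -(x*t)) (-x) t := by
    simpa using ((hasDerivAt_id t).const_mul x).fun_neg
  have h2 : HasDerivAt (fun t : ℝ => Real.exp (-(x*t))) (Real.exp (-(x*t)) * (-x)) t := h1.exp
  have h3 : HasDerivAt (fun t : ℝ => x*t+1) x t := by
    simpa using ((hasDerivAt_id t).const_mul x).add_const 1
  have h4 := ((h2.mul h3).neg).div_const (x^2)
  refine h4.congr_deriv ?_
  field_simp
  ring

lemma aux_tendsto_A {x : ℝ} (hx : 0 < x) :
    Tendsto (fun t : ℝ => -(Real.exp (-(x*t)) * (x*t+1)) / x^2) atTop (nhds 0) := by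
  have hxt : Tendsto (fun t : ℝ => x*t) atTop atTop :=
    Tendsto.const_mul_atTop hx tendsto_id
  have h0 : Tendsto (fun u : ℝ => -(Real.exp (-u) * (u+1)) / x^2) atTop (nhds 0) := by
    have h1 : Tendsto (fun u : ℝ => u * Real.exp (-u)) atTop (nhds 0) := by
      simpa using tendsto_pow_mul_exp_neg_atTop_nhds_zero 1
    have h2 : Tendsto (fun u : ℝ => Real.exp (-u)) atTop (nhds 0) :=
      Real.tendsto_exp_neg_atTop_nhds_zero
    have := ((h1.add h2).neg).div_const (x^2)
    simpa [mul_add] using this.congr (fun u => by ring)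
  exact h0.comp hxt

lemma step_A {x : ℝ} (hx : 0 < x) :
    ∫ t in Ioi (0:ℝ), t * Real.exp (-(x*t)) = 1 / x^2 := by
  have := integral_Ioi_of_hasDerivAt_of_nonneg
    (g := fun t : ℝ => -(Real.exp (-(x*t)) * (x*t+1)) / x^2)
    (g' := fun t : ℝ => t * Real.exp (-(x*t))) (a := 0)
    ((aux_hasDerivAt_A hx 0).continuousAt.continuousWithinAt)
    (fun t _ => aux_hasDerivAt_A hx t)
    (fun t ht => by
      have : (0:ℝ) < t := ht
      positivity) (aux_tendsto_A hx)
  rw [this]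
  norm_num [neg_div]

lemma integrableOn_A {x : ℝ} (hx : 0 < x) :
    IntegrableOn (fun t : ℝ => t * Real.exp (-(x*t))) (Ioi (0:ℝ)) :=
  integrableOn_Ioi_deriv_of_nonneg
    ((aux_hasDerivAt_A hx 0).continuousAt.continuousWithinAt)
    (fun t _ => aux_hasDerivAt_A hx t)
    (fun t ht => by
      have : (0:ℝ) < t := ht
      positivity) (aux_tendsto_A hx)

/-- antiderivative for step B -/
noncomputable def gB (t x : ℝ) : ℝ :=
  -Real.exp (-(t*x))/2 +
    t * Real.exp (-(t*x)) * (t * Real.cos (2*x) - 2 * Real.sin (2*x)) / (2*(t^2+4))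

lemma aux_hasDerivAt_B {t : ℝ} (ht : 0 < t) (x : ℝ) :
    HasDerivAt (gB t) (t * Real.exp (-(t*x)) * Real.sin x ^ 2) x := by
  have h1 : HasDerivAt (fun x : ℝ => -(t*x)) (-t) x := by
    simpa using ((hasDerivAt_id x).const_mul t).fun_neg
  have h2 : HasDerivAt (fun x : ℝ => Real.exp (-(t*x))) (Real.exp (-(t*x)) * (-t)) x := h1.exp
  have h2x : HasDerivAt (fun x : ℝ => (2:ℝ)*x) 2 x := by
    simpa using (hasDerivAt_id x).const_mul 2
  have hcos : HasDerivAt (fun x : ℝ => Real.cos (2*x)) (-Real.sin (2*x) * 2) x := h2x.cos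
  have hsin : HasDerivAt (fun x : ℝ => Real.sin (2*x)) (Real.cos (2*x) * 2) x := h2x.sin
  have h3 : HasDerivAt (fun x : ℝ => t * Real.cos (2*x) - 2 * Real.sin (2*x))
      (t * (-Real.sin (2*x) * 2) - 2 * (Real.cos (2*x) * 2)) x :=
    (hcos.const_mul t).sub (hsin.const_mul 2)
  have h4 := (((h2.const_mul t).mul h3).div_const (2*(t^2+4))).add_const 0
  have h5 := ((h2.neg).div_const 2).add (((h2.const_mul t).mul h3).div_const (2*(t^2+4)))
  have key : HasDerivAt (gB t)
      ((-(Real.exp (-(t*x)) * (-t)))/2 +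
        (t * (Real.exp (-(t*x)) * (-t)) * (t * Real.cos (2*x) - 2 * Real.sin (2*x)) +
         t * Real.exp (-(t*x)) * (t * (-Real.sin (2*x) * 2) - 2 * (Real.cos (2*x) * 2)))
          / (2*(t^2+4))) x := h5
  convert key using 1
  have hc2 : Real.cos (2*x) = 1 - 2 * Real.sin x ^ 2 := by
    rw [Real.cos_two_mul]
    nlinarith [Real.sin_sq_add_cos_sq x]
  rw [hc2]
  have h4pos : (t^2+4) ≠ 0 := by positivity
  field_simp
  ring

lemma aux_tendsto_B {t : ℝ} (ht : 0 < t) :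
    Tendsto (gB t) atTop (nhds 0) := by
  apply squeeze_zero_norm (a := fun x => Real.exp (-(t*x)) * (1/2 + t*(t+2)/(2*(t^2+4))))
  · intro x
    have he : 0 < Real.exp (-(t*x)) := Real.exp_pos _
    have hb : |t * Real.cos (2*x) - 2 * Real.sin (2*x)| ≤ t + 2 := by
      have := Real.neg_one_le_cos (2*x)
      have := Real.cos_le_one (2*x)
      have := Real.neg_one_le_sin (2*x)
      have := Real.sin_le_one (2*x)
      rw [abs_le]; constructor <;> nlinarith
    have h1 : |(-Real.exp (-(t*x))/2)| = Real.exp (-(t*x)) / 2 := by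
      rw [abs_div, abs_neg, abs_of_pos he]; norm_num
    calc ‖gB t x‖ ≤ |(-Real.exp (-(t*x))/2)| +
          |t * Real.exp (-(t*x)) * (t * Real.cos (2*x) - 2 * Real.sin (2*x)) / (2*(t^2+4))|
        := abs_add_le _ _
      _ ≤ Real.exp (-(t*x)) / 2 + t * Real.exp (-(t*x)) * (t+2) / (2*(t^2+4)) := by
          rw [h1, abs_div, abs_of_pos (show (0:ℝ) < 2*(t^2+4) by positivity), abs_mul, abs_mul,
            abs_of_pos ht, abs_of_pos he]
          gcongr

      _ = Real.exp (-(t*x)) * (1/2 + t*(t+2)/(2*(t^2+4))) := by ring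
  · have h2 : Tendsto (fun x : ℝ => Real.exp (-(t*x))) atTop (nhds 0) :=
      Real.tendsto_exp_neg_atTop_nhds_zero.comp (Tendsto.const_mul_atTop ht tendsto_id)
    simpa using h2.mul_const (1/2 + t*(t+2)/(2*(t^2+4)))

lemma gB_zero {t : ℝ} (ht : 0 < t) : gB t 0 = -2/(t^2+4) := by
  have h4pos : (t^2+4) ≠ 0 := by positivity
  simp only [gB, mul_zero, neg_zero, Real.exp_zero, Real.cos_zero, Real.sin_zero]
  field_simp
  ring

lemma step_B {t : ℝ} (ht : 0 < t) :
    ∫ x in Ioi (0:ℝ), t * Real.exp (-(t*x)) * Real.sin x ^ 2 = 2/(t^2+4) := by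
  have := integral_Ioi_of_hasDerivAt_of_nonneg (g := gB t)
    (g' := fun x => t * Real.exp (-(t*x)) * Real.sin x ^ 2) (a := 0)
    ((aux_hasDerivAt_B ht 0).continuousAt.continuousWithinAt)
    (fun x _ => aux_hasDerivAt_B ht x)
    (fun x _ => by positivity) (aux_tendsto_B ht)
  rw [this, gB_zero ht]
  ring

lemma integrableOn_B {t : ℝ} (ht : 0 < t) :
    IntegrableOn (fun x : ℝ => t * Real.exp (-(t*x)) * Real.sin x ^ 2) (Ioi (0:ℝ)) :=
  integrableOn_Ioi_deriv_of_nonneg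
    ((aux_hasDerivAt_B ht 0).continuousAt.continuousWithinAt)
    (fun x _ => aux_hasDerivAt_B ht x)
    (fun x _ => by positivity) (aux_tendsto_B ht)

lemma step_C : ∫ t in Ioi (0:ℝ), 2/(t^2+4) = π/2 := by
  have hder : ∀ t : ℝ, HasDerivAt (fun t : ℝ => Real.arctan (t/2)) (2/(t^2+4)) t := by
    intro t
    have h1 : HasDerivAt (fun t : ℝ => t/2) (1/2 : ℝ) t := by
      simpa using (hasDerivAt_id t).div_const 2
    have := (Real.hasDerivAt_arctan (t/2)).comp t h1
    refine this.congr_deriv ?_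
    rw [div_pow]
    field_simp
    ring
  have htend : Tendsto (fun t : ℝ => Real.arctan (t/2)) atTop (nhds (π/2)) := by
    have : Tendsto (fun t : ℝ => t/2) atTop atTop := tendsto_id.atTop_div_const (by norm_num)
    exact (Real.tendsto_arctan_atTop.mono_right nhdsWithin_le_nhds).comp this
  have := integral_Ioi_of_hasDerivAt_of_nonneg (g := fun t : ℝ => Real.arctan (t/2))
    (g' := fun t : ℝ => 2/(t^2+4)) (a := 0)
    ((hder 0).continuousAt.continuousWithinAt)
    (fun t _ => hder t) (fun t _ => by positivity) htend
  rw [this]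
  simp

lemma integrableOn_C : IntegrableOn (fun t : ℝ => 2/(t^2+4)) (Ioi (0:ℝ)) := by
  have hder : ∀ t : ℝ, HasDerivAt (fun t : ℝ => Real.arctan (t/2)) (2/(t^2+4)) t := by
    intro t
    have h1 : HasDerivAt (fun t : ℝ => t/2) (1/2 : ℝ) t := by
      simpa using (hasDerivAt_id t).div_const 2
    have := (Real.hasDerivAt_arctan (t/2)).comp t h1
    refine this.congr_deriv ?_
    rw [div_pow]
    field_simp
    ring
  have htend : Tendsto (fun t : ℝ => Real.arctan (t/2)) atTop (nhds (π/2)) := by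
    have : Tendsto (fun t : ℝ => t/2) atTop atTop := tendsto_id.atTop_div_const (by norm_num)
    exact (Real.tendsto_arctan_atTop.mono_right nhdsWithin_le_nhds).comp this
  exact integrableOn_Ioi_deriv_of_nonneg ((hder 0).continuousAt.continuousWithinAt)
    (fun t _ => hder t) (fun t _ => by positivity) htend


/-- ∫₀^∞ sin²x/x² dx = π/2. -/
theorem sin_sq_div_sq_integral :
    ∫ x in Set.Ioi (0:ℝ), Real.sin x ^ 2 / x ^ 2 = π / 2 := by
  have hmeas : Measurable fun p : ℝ × ℝ =>
      ENNReal.ofReal (p.2 * Real.exp (-(p.1 * p.2)) * Real.sin p.1 ^ 2) := by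
    apply ENNReal.measurable_ofReal.comp
    fun_prop
  -- inner lintegral in t equals ofReal (sin²x/x²) for x > 0
  have h1 : ∀ x ∈ Ioi (0:ℝ),
      (∫⁻ t in Ioi (0:ℝ), ENNReal.ofReal (t * Real.exp (-(x*t)) * Real.sin x ^ 2))
        = ENNReal.ofReal (Real.sin x ^ 2 / x ^ 2) := by
    intro x hx
    rw [mem_Ioi] at hx
    have hint : IntegrableOn (fun t : ℝ => t * Real.exp (-(x*t)) * Real.sin x ^ 2)
        (Ioi (0:ℝ)) := (integrableOn_A hx).mul_const _
    have hnn : 0 ≤ᵐ[volume.restrict (Ioi (0:ℝ))]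
        fun t : ℝ => t * Real.exp (-(x*t)) * Real.sin x ^ 2 :=
      (ae_restrict_iff' measurableSet_Ioi).mpr
        (Filter.Eventually.of_forall fun t ht => by
          have : (0:ℝ) < t := ht
          positivity)
    rw [← MeasureTheory.ofReal_integral_eq_lintegral_ofReal hint hnn]
    congr 1
    rw [MeasureTheory.integral_mul_const, step_A hx]
    field_simp
  -- inner lintegral in x equals ofReal (2/(t²+4)) for t > 0
  have h2 : ∀ t ∈ Ioi (0:ℝ),
      (∫⁻ x in Ioi (0:ℝ), ENNReal.ofReal (t * Real.exp (-(x*t)) * Real.sin x ^ 2))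
        = ENNReal.ofReal (2/(t^2+4)) := by
    intro t ht
    rw [mem_Ioi] at ht
    have hnn : 0 ≤ᵐ[volume.restrict (Ioi (0:ℝ))]
        fun x : ℝ => t * Real.exp (-(t*x)) * Real.sin x ^ 2 :=
      Filter.Eventually.of_forall fun x => by positivity
    calc ∫⁻ x in Ioi (0:ℝ), ENNReal.ofReal (t * Real.exp (-(x*t)) * Real.sin x ^ 2)
        = ∫⁻ x in Ioi (0:ℝ), ENNReal.ofReal (t * Real.exp (-(t*x)) * Real.sin x ^ 2) :=
          lintegral_congr fun x => by rw [mul_comm x t]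
      _ = ENNReal.ofReal (2/(t^2+4)) := by
          rw [← MeasureTheory.ofReal_integral_eq_lintegral_ofReal (integrableOn_B ht) hnn,
            step_B ht]
  have hnn0 : 0 ≤ᵐ[volume.restrict (Ioi (0:ℝ))] fun x : ℝ => Real.sin x ^ 2 / x ^ 2 :=
    Filter.Eventually.of_forall fun x => by positivity
  have hsm : AEStronglyMeasurable (fun x : ℝ => Real.sin x ^ 2 / x ^ 2)
      (volume.restrict (Ioi (0:ℝ))) := by
    apply Measurable.aestronglyMeasurable
    fun_prop
  rw [MeasureTheory.integral_eq_lintegral_of_nonneg_ae hnn0 hsm]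
  have key : (∫⁻ x in Ioi (0:ℝ), ENNReal.ofReal (Real.sin x ^ 2 / x ^ 2))
      = ENNReal.ofReal (π/2) := by
    calc ∫⁻ x in Ioi (0:ℝ), ENNReal.ofReal (Real.sin x ^ 2 / x ^ 2)
        = ∫⁻ x in Ioi (0:ℝ), ∫⁻ t in Ioi (0:ℝ),
            ENNReal.ofReal (t * Real.exp (-(x*t)) * Real.sin x ^ 2) :=
          (setLIntegral_congr_fun measurableSet_Ioi
            (fun x hx => (h1 x hx).symm))
      _ = ∫⁻ t in Ioi (0:ℝ), ∫⁻ x in Ioi (0:ℝ),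
            ENNReal.ofReal (t * Real.exp (-(x*t)) * Real.sin x ^ 2) :=
          MeasureTheory.lintegral_lintegral_swap hmeas.aemeasurable
      _ = ∫⁻ t in Ioi (0:ℝ), ENNReal.ofReal (2/(t^2+4)) :=
          setLIntegral_congr_fun measurableSet_Ioi
            (fun t ht => h2 t ht)
      _ = ENNReal.ofReal (π/2) := by
          have hnn : 0 ≤ᵐ[volume.restrict (Ioi (0:ℝ))] fun t : ℝ => 2/(t^2+4) :=
            Filter.Eventually.of_forall fun t => by positivity
          rw [← MeasureTheory.ofReal_integral_eq_lintegral_ofReal integrableOn_C hnn, step_C]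
  rw [key, ENNReal.toReal_ofReal (by positivity)]
end

section
/- The integral of sin³(x)/x³ from 0 to infinity equals 3π/8. -/
open Real MeasureTheory Set Filter Topology

lemma cexp_integrable {t b : ℝ} (ht : 0 < t) :
    IntegrableOn (fun x : ℝ => Complex.exp ((-t + b*Complex.I) * x)) (Ioi 0) := by
  refine ((exp_neg_integrableOn_Ioi 0 ht)).mono' ?_ ?_
  · exact (Complex.continuous_exp.comp (by continuity)).aestronglyMeasurable
  · filter_upwards with x
    rw [Complex.norm_exp]
    simp [mul_comm]

lemma laplace_sin {t : ℝ} (b : ℝ) (ht : 0 < t) :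
    ∫ x in Ioi (0:ℝ), Real.exp (-(t*x)) * Real.sin (b*x) = b / (t^2 + b^2) := by
  set c : ℂ := -t + b*Complex.I with hc
  have hc0 : c ≠ 0 := by
    intro h
    have h2 : c.re = 0 := by rw [h]; simp
    simp only [hc, Complex.add_re, Complex.neg_re, Complex.ofReal_re, Complex.mul_re,
      Complex.I_re, Complex.ofReal_im, Complex.I_im] at h2
    nlinarith
  have hint := cexp_integrable (t := t) (b := b) ht
  have hval : ∫ x in Ioi (0:ℝ), Complex.exp (c * x) = -1/c := by
    have h1 := intervalIntegral_tendsto_integral_Ioi 0 hint tendsto_id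
    have h2 : Tendsto (fun T : ℝ => ∫ x in (0:ℝ)..T, Complex.exp (c * x)) atTop (𝓝 (-1/c)) := by
      have : ∀ T : ℝ, (∫ x in (0:ℝ)..T, Complex.exp (c * x))
          = (Complex.exp (c * T) - 1) / c := by
        intro T; rw [integral_exp_mul_complex hc0]; simp
      simp_rw [this]
      have hlim : Tendsto (fun T : ℝ => Complex.exp (c * T)) atTop (𝓝 0) := by
        rw [tendsto_zero_iff_norm_tendsto_zero]
        have : ∀ T : ℝ, ‖Complex.exp (c * T)‖ = Real.exp (-t * T) := by
          intro T; rw [Complex.norm_exp]; congr 1; simp [hc]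
        simp_rw [this]
        exact Real.tendsto_exp_atBot.comp (tendsto_id.const_mul_atTop_of_neg (by linarith))
      have := (hlim.sub (tendsto_const_nhds (x := (1:ℂ)))).div_const c
      simpa using this
    exact tendsto_nhds_unique h1 h2
  have him : ∀ x : ℝ, Real.exp (-(t*x)) * Real.sin (b*x) = (Complex.exp (c * x)).im := by
    intro x
    rw [Complex.exp_im]
    congr 1 <;> [skip; congr 1] <;> simp [hc]
  calc ∫ x in Ioi (0:ℝ), Real.exp (-(t*x)) * Real.sin (b*x)
      = ∫ x in Ioi (0:ℝ), (Complex.exp (c * x)).im := by simp_rw [him]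
    _ = (∫ x in Ioi (0:ℝ), Complex.exp (c * x)).im := by simpa using integral_im hint
    _ = b / (t^2 + b^2) := by
        rw [hval, hc]
        rw [Complex.div_im]
        simp [Complex.normSq_apply]
        ring

lemma laplace_sin_int {t : ℝ} (b : ℝ) (ht : 0 < t) :
    IntegrableOn (fun x : ℝ => Real.exp (-(t*x)) * Real.sin (b*x)) (Ioi 0) := by
  refine (exp_neg_integrableOn_Ioi 0 ht).mono' ((Real.continuous_exp.comp (by continuity)).mul (Real.continuous_sin.comp (by continuity))).aestronglyMeasurable ?_
  filter_upwards with x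
  rw [norm_mul, Real.norm_eq_abs, Real.norm_eq_abs, Real.abs_exp, neg_mul]
  calc Real.exp (-(t*x)) * |Real.sin (b*x)| ≤ Real.exp (-(t*x)) * 1 := by
        gcongr
        exact abs_le.mpr ⟨Real.neg_one_le_sin _, Real.sin_le_one _⟩
    _ = Real.exp (-(t*x)) := mul_one _

lemma exp_sin3 {t : ℝ} (ht : 0 < t) :
    ∫ x in Ioi (0:ℝ), Real.exp (-(t*x)) * Real.sin x ^ 3
      = 3/4 * (1/(t^2+1) - 1/(t^2+9)) := by
  have e : ∀ x : ℝ, Real.exp (-(t*x)) * Real.sin x ^ 3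
      = 3/4 * (Real.exp (-(t*x)) * Real.sin (1*x)) - 1/4 * (Real.exp (-(t*x)) * Real.sin (3*x)) := by
    intro x
    rw [Real.sin_three_mul, one_mul]
    ring
  simp_rw [e]
  rw [integral_sub ((laplace_sin_int 1 ht).const_mul _) ((laplace_sin_int 3 ht).const_mul _),
    integral_const_mul, integral_const_mul, laplace_sin 1 ht, laplace_sin 3 ht]
  norm_num
  ring

lemma texp_int {x : ℝ} (hx : 0 < x) :
    IntegrableOn (fun t : ℝ => t^2 * Real.exp (-(x*t))) (Ioi 0) := by
  have h := integrableOn_rpow_mul_exp_neg_mul_rpow (p := 1) (s := 2) (by norm_num) (by norm_num) hx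
  refine h.congr_fun ?_ measurableSet_Ioi
  intro t ht
  simp only [Real.rpow_one, Real.rpow_two]
  ring_nf

lemma texp_val {x : ℝ} (hx : 0 < x) :
    ∫ t in Ioi (0:ℝ), t^2 * Real.exp (-(x*t)) = 2 / x^3 := by
  have h := Real.integral_rpow_mul_exp_neg_mul_Ioi (a := 3) (by norm_num) hx
  rw [show (3:ℝ) - 1 = 2 by norm_num] at h
  have e : ∀ t ∈ Ioi (0:ℝ), t ^ (2:ℝ) * Real.exp (-(x*t)) = t^2 * Real.exp (-(x*t)) := by
    intro t _
    rw [Real.rpow_two]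
  rw [setIntegral_congr_fun measurableSet_Ioi e] at h
  rw [h]
  have hg : Real.Gamma 3 = 2 := by
    rw [show (3:ℝ) = (2:ℕ) + 1 by norm_num, Real.Gamma_nat_eq_factorial]
    norm_num
  rw [hg, show (3:ℝ) = ((3:ℕ):ℝ) by norm_num, Real.rpow_natCast]
  field_simp

lemma majorant_int : IntegrableOn (fun x : ℝ => |Real.sin x ^ 3| * (2 / x ^ 3)) (Ioi 0) := by
  have hmeas : Measurable fun x : ℝ => |Real.sin x ^ 3| * (2 / x ^ 3) :=
    (Real.measurable_sin.pow_const 3).abs.mul (measurable_const.div (measurable_id.pow_const 3))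
  rw [← Ioc_union_Ioi_eq_Ioi (zero_le_one' ℝ)]
  refine IntegrableOn.union ?_ ?_
  · refine ((integrableOn_const_iff (C := (2:ℝ))).mpr (Or.inr measure_Ioc_lt_top)).mono'
      (hmeas.aestronglyMeasurable.restrict) ?_
    refine (ae_restrict_iff' measurableSet_Ioc).2 (ae_of_all _ fun x hx => ?_)
    have hx0 : 0 < x := hx.1
    have hs : |Real.sin x| ≤ x := (Real.abs_sin_le_abs).trans_eq (abs_of_pos hx0)
    have hs3 : |Real.sin x| ^ 3 ≤ x ^ 3 := pow_le_pow_left₀ (abs_nonneg _) hs 3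
    rw [Real.norm_eq_abs, abs_of_nonneg (by positivity), abs_pow]
    calc |Real.sin x| ^ 3 * (2 / x ^ 3) ≤ x ^ 3 * (2 / x ^ 3) := by
          gcongr
      _ = 2 := by field_simp
  · refine ((integrableOn_Ioi_rpow_of_lt (show (-3:ℝ) < -1 by norm_num) one_pos).const_mul
      2).mono' (hmeas.aestronglyMeasurable.restrict) ?_
    refine (ae_restrict_iff' measurableSet_Ioi).2 (ae_of_all _ fun x hx => ?_)
    have hx1 : (1:ℝ) < x := hx
    have hx0 : (0:ℝ) < x := lt_trans one_pos hx1
    have hrp : x ^ (-3:ℝ) = 1 / x ^ 3 := by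
      rw [Real.rpow_neg hx0.le, show (3:ℝ) = ((3:ℕ):ℝ) by norm_num, Real.rpow_natCast]
      rw [one_div]
    rw [Real.norm_eq_abs, abs_of_nonneg (by positivity), hrp, abs_pow]
    have hs3 : |Real.sin x| ^ 3 ≤ 1 := by
      refine pow_le_one₀ (abs_nonneg _) (abs_le.mpr ⟨Real.neg_one_le_sin _, Real.sin_le_one _⟩)
    calc |Real.sin x| ^ 3 * (2 / x ^ 3) ≤ 1 * (2 / x ^ 3) := by
          gcongr
      _ = 2 * (1 / x ^ 3) := by ring

/-- ∫₀^∞ sin³x/x³ dx = 3π/8. -/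
theorem sin_cube_div_cube_integral :
    ∫ x in Set.Ioi (0:ℝ), Real.sin x ^ 3 / x ^ 3 = 3 * π / 8 := by
  set μ := volume.restrict (Ioi (0:ℝ)) with hμ
  set f : ℝ → ℝ → ℝ := fun x t => t ^ 2 * Real.exp (-(x * t)) * Real.sin x ^ 3 with hf
  have hfm : AEStronglyMeasurable (Function.uncurry f) (μ.prod μ) := by
    apply Continuous.aestronglyMeasurable
    apply Continuous.mul
    apply Continuous.mul
    · exact (continuous_snd.pow 2)
    · exact Real.continuous_exp.comp (continuous_fst.mul continuous_snd).neg
    · exact (Real.continuous_sin.comp continuous_fst).pow 3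
  have hfx : ∀ x ∈ Ioi (0:ℝ), Integrable (f x) μ := by
    intro x hx
    exact ((texp_int hx).mul_const _)
  have hnorm : ∀ x ∈ Ioi (0:ℝ), ∫ t, ‖f x t‖ ∂μ = |Real.sin x ^ 3| * (2 / x ^ 3) := by
    intro x hx
    have e : ∀ t : ℝ, ‖f x t‖ = t ^ 2 * Real.exp (-(x * t)) * |Real.sin x ^ 3| := by
      intro t
      rw [Real.norm_eq_abs, abs_mul, abs_mul, abs_of_nonneg (sq_nonneg t),
        abs_of_nonneg (Real.exp_pos _).le]
    simp_rw [e]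
    rw [hμ, integral_mul_const, texp_val hx, mul_comm]
  have hint : Integrable (Function.uncurry f) (μ.prod μ) := by
    rw [integrable_prod_iff hfm]
    constructor
    · rw [hμ]
      exact (ae_restrict_iff' measurableSet_Ioi).2 (ae_of_all _ hfx)
    · refine majorant_int.congr ?_
      rw [hμ]
      exact (ae_restrict_iff' measurableSet_Ioi).2 (ae_of_all _ fun x hx => (hnorm x hx).symm)
  have step1 : ∀ x ∈ Ioi (0:ℝ), Real.sin x ^ 3 / x ^ 3 = (1/2) * ∫ t, f x t ∂μ := by
    intro x hx
    have hx0 : (0:ℝ) < x := hx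
    have : ∫ t, f x t ∂μ = (2 / x ^ 3) * Real.sin x ^ 3 := by
      rw [hμ, hf]
      simp only []
      rw [integral_mul_const, texp_val hx]
    rw [this]
    field_simp
  have I1 : ∫ t in Ioi (0:ℝ), (1 + t ^ 2)⁻¹ = π / 2 := by
    rw [integral_Ioi_inv_one_add_sq]
    simp
  have I1' : IntegrableOn (fun t : ℝ => (1 + t ^ 2)⁻¹) (Ioi 0) :=
    integrable_inv_one_add_sq.integrableOn
  have I9' : IntegrableOn (fun t : ℝ => (1 + (t / 3) ^ 2)⁻¹) (Ioi 0) :=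
    (integrable_inv_one_add_sq.comp_div (by norm_num : (3:ℝ) ≠ 0)).integrableOn
  have I9 : ∫ t in Ioi (0:ℝ), (1 + (t / 3) ^ 2)⁻¹ = 3 * (π / 2) := by
    have h := integral_comp_mul_left_Ioi (fun u : ℝ => (1 + u ^ 2)⁻¹) 0
      (show (0:ℝ) < 3⁻¹ by norm_num)
    simp only [mul_zero, smul_eq_mul, inv_inv] at h
    calc ∫ t in Ioi (0:ℝ), (1 + (t / 3) ^ 2)⁻¹
        = ∫ t in Ioi (0:ℝ), (1 + (3⁻¹ * t) ^ 2)⁻¹ := by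
          refine setIntegral_congr_fun measurableSet_Ioi fun t _ => ?_
          rw [div_eq_inv_mul]
      _ = 3 * ∫ u in Ioi (0:ℝ), (1 + u ^ 2)⁻¹ := h
      _ = 3 * (π / 2) := by rw [I1]
  calc ∫ x in Ioi (0:ℝ), Real.sin x ^ 3 / x ^ 3
      = ∫ x in Ioi (0:ℝ), (1/2) * ∫ t, f x t ∂μ :=
        setIntegral_congr_fun measurableSet_Ioi step1
    _ = (1/2) * ∫ x, (∫ t, f x t ∂μ) ∂μ := by rw [hμ, integral_const_mul]
    _ = (1/2) * ∫ t, (∫ x, f x t ∂μ) ∂μ := by rw [integral_integral_swap hint]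
    _ = (1/2) * ∫ t in Ioi (0:ℝ), (3/4) * ((1 + (t / 3) ^ 2)⁻¹ - (1 + t ^ 2)⁻¹) := by
        rw [hμ]
        congr 1
        refine setIntegral_congr_fun measurableSet_Ioi fun t ht => ?_
        have ht0 : (0:ℝ) < t := ht
        have hx2 : ∫ x, f x t ∂μ = t ^ 2 * ∫ x in Ioi (0:ℝ),
            Real.exp (-(t * x)) * Real.sin x ^ 3 := by
          rw [hμ, ← integral_const_mul]
          refine setIntegral_congr_fun measurableSet_Ioi fun x _ => ?_
          rw [hf]
          simp only []
          rw [mul_comm x t]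
          ring
        rw [hx2, exp_sin3 ht0]
        have h1 : (0:ℝ) < t ^ 2 + 1 := by positivity
        have h9 : (0:ℝ) < t ^ 2 + 9 := by positivity
        field_simp
        ring
    _ = (1/2) * ((3/4) * ((3 * (π / 2)) - π / 2)) := by
        rw [integral_const_mul, integral_sub I9' I1', I9, I1]
    _ = 3 * π / 8 := by ring
end

section
/- The integral of sin⁴(x)/x⁴ from 0 to infinity equals π/3. -/
open Real MeasureTheory Set Filter Topology

-- sin⁴ in terms of cosines
lemma sin_pow_four_eq (x : ℝ) :
    Real.sin x ^ 4 = 3/8 - Real.cos (2*x)/2 + Real.cos (4*x)/8 := by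
  have h2 : Real.cos (2*x) = 2 * Real.cos x ^ 2 - 1 := Real.cos_two_mul x
  have h4 : Real.cos (4*x) = 2 * Real.cos (2*x) ^ 2 - 1 := by
    rw [show (4:ℝ)*x = 2*(2*x) by ring, Real.cos_two_mul]
  have hp : Real.sin x ^ 2 = 1 - Real.cos x ^ 2 := Real.sin_sq x
  rw [h4, h2, show Real.sin x ^ 4 = (Real.sin x ^ 2) ^ 2 by ring, hp]
  ring

lemma sin_pow_four_le_one (x : ℝ) : Real.sin x ^ 4 ≤ 1 := by
  have h1 := Real.neg_one_le_sin x
  nlinarith [Real.sin_sq_le_one x, sq_nonneg (Real.sin x ^ 2 - 1)]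

lemma laplace_integrable {t : ℝ} (ht : 0 < t) (a : ℝ) :
    IntegrableOn (fun x : ℝ => Real.exp (-(t*x)) * Real.cos (a*x)) (Ioi 0) := by
  have h : IntegrableOn (fun x : ℝ => Real.exp (-t*x)) (Ioi 0) :=
    exp_neg_integrableOn_Ioi 0 ht
  refine Integrable.mono h ((Real.continuous_exp.comp (continuous_const.mul continuous_id).neg).mul
    (Real.continuous_cos.comp (continuous_const.mul continuous_id))).aestronglyMeasurable ?_
  filter_upwards with x
  rw [norm_mul, Real.norm_eq_abs, Real.norm_eq_abs, Real.abs_exp, Real.norm_eq_abs, Real.abs_exp,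
    neg_mul]
  have := Real.abs_cos_le_one (a*x)
  nlinarith [Real.exp_pos (-(t*x))]

lemma laplace_cos {t : ℝ} (ht : 0 < t) (a : ℝ) :
    ∫ x in Ioi (0:ℝ), Real.exp (-(t*x)) * Real.cos (a*x) = t / (t^2 + a^2) := by
  have hD : 0 < t^2 + a^2 := by positivity
  set F : ℝ → ℝ := fun x =>
    Real.exp (-(t*x)) * (a * Real.sin (a*x) - t * Real.cos (a*x)) / (t^2 + a^2) with hFdef
  have hderiv : ∀ x ∈ Ici (0:ℝ), HasDerivAt F (Real.exp (-(t*x)) * Real.cos (a*x)) x := by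
    intro x _
    have hl : HasDerivAt (fun x : ℝ => t * x) t x := by simpa using (hasDerivAt_id x).const_mul t
    have ha : HasDerivAt (fun x : ℝ => a * x) a x := by simpa using (hasDerivAt_id x).const_mul a
    have h1 : HasDerivAt (fun x : ℝ => Real.exp (-(t*x))) (Real.exp (-(t*x)) * (-t)) x :=
      hl.neg.exp
    have h2 : HasDerivAt (fun x : ℝ => a * Real.sin (a*x) - t * Real.cos (a*x))
        (a * (Real.cos (a*x) * a) - t * (-Real.sin (a*x) * a)) x :=
      (ha.sin.const_mul a).sub (ha.cos.const_mul t)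
    have := ((h1.mul h2).div_const (t^2 + a^2))
    refine HasDerivAt.congr_deriv this ?_
    field_simp
    ring
  have htend : Tendsto F atTop (𝓝 0) := by
    have hexp : Tendsto (fun x : ℝ => Real.exp (-(t*x))) atTop (𝓝 0) := by
      have h1 : Tendsto (fun x : ℝ => t * x) atTop atTop :=
        tendsto_id.const_mul_atTop ht
      have h2 : Tendsto (fun x : ℝ => -(t*x)) atTop atBot :=
        tendsto_neg_atTop_atBot.comp h1
      exact Real.tendsto_exp_atBot.comp h2
    have hg : Tendsto (fun x : ℝ => Real.exp (-(t*x)) * ((|a| + t) / (t^2+a^2))) atTop (𝓝 0) := by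
      simpa using hexp.mul_const ((|a| + t) / (t^2+a^2))
    refine squeeze_zero_norm (fun x => ?_) hg
    rw [hFdef]
    simp only
    rw [Real.norm_eq_abs, abs_div, abs_mul, Real.abs_exp, abs_of_pos hD,
      show Real.exp (-(t*x)) * ((|a| + t) / (t ^ 2 + a ^ 2))
        = Real.exp (-(t*x)) * (|a| + t) / (t ^ 2 + a ^ 2) by ring]
    have h1 : |a * Real.sin (a*x) - t * Real.cos (a*x)| ≤ |a| + t := by
      calc |a * Real.sin (a*x) - t * Real.cos (a*x)|
          ≤ |a * Real.sin (a*x)| + |t * Real.cos (a*x)| := abs_sub _ _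
        _ ≤ |a| + t := by
            rw [abs_mul, abs_mul, abs_of_pos ht]
            have hs := abs_sin_le_one (a*x)
            have hc := Real.abs_cos_le_one (a*x)
            have h0s := abs_nonneg (Real.sin (a*x))
            have h0c := abs_nonneg (Real.cos (a*x))
            have := abs_nonneg a
            nlinarith
    gcongr
  have := integral_Ioi_of_hasDerivAt_of_tendsto' hderiv (laplace_integrable ht a) htend
  rw [this, hFdef]
  simp only [mul_zero, neg_zero, Real.exp_zero, Real.sin_zero, Real.cos_zero, mul_one, one_mul, zero_sub]
  ring

lemma integrableOn_inv_sq_add {a : ℝ} (ha : 1 ≤ a) :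
    IntegrableOn (fun t : ℝ => (t^2 + a^2)⁻¹) (Ioi 0) := by
  have ha0 : 0 < a := lt_of_lt_of_le one_pos ha
  refine Integrable.mono integrable_inv_one_add_sq.integrableOn
    (((continuous_pow 2).add continuous_const).inv₀
      (fun t => by simp only [Pi.add_apply]; positivity)).aestronglyMeasurable ?_
  filter_upwards with t
  rw [Real.norm_eq_abs, Real.norm_eq_abs, abs_of_pos (by positivity),
    abs_of_pos (by positivity : (0:ℝ) < (1 + t^2)⁻¹)]
  apply inv_anti₀ (by positivity)
  nlinarith

lemma integral_inv_sq_add {a : ℝ} (ha : 1 ≤ a) :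
    ∫ t in Ioi (0:ℝ), (t^2 + a^2)⁻¹ = π / (2*a) := by
  have ha0 : 0 < a := lt_of_lt_of_le one_pos ha
  set F : ℝ → ℝ := fun t => Real.arctan (t/a) / a with hFdef
  have hderiv : ∀ t ∈ Ici (0:ℝ), HasDerivAt F ((t^2 + a^2)⁻¹) t := by
    intro t _
    have h1 : HasDerivAt (fun t : ℝ => t/a) (1/a) t := by
      simpa using (hasDerivAt_id t).div_const a
    have h2 := ((Real.hasDerivAt_arctan (t/a)).comp t h1).div_const a
    refine HasDerivAt.congr_deriv h2 ?_
    have : 1 + (t/a)^2 ≠ 0 := by positivity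
    field_simp
    ring
  have htend : Tendsto F atTop (𝓝 (π / (2*a))) := by
    have h1 : Tendsto (fun t : ℝ => t/a) atTop atTop :=
      tendsto_id.atTop_div_const ha0
    have h2 : Tendsto (fun t : ℝ => Real.arctan (t/a)) atTop (𝓝 (π/2)) :=
      (tendsto_nhds_of_tendsto_nhdsWithin Real.tendsto_arctan_atTop).comp h1
    have := h2.div_const a
    convert this using 2
    ring
  have := integral_Ioi_of_hasDerivAt_of_tendsto' hderiv (integrableOn_inv_sq_add ha) htend
  rw [this, hFdef]
  simp

lemma integral_cube_exp {x : ℝ} (hx : 0 < x) :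
    ∫ t in Ioi (0:ℝ), t^3 * Real.exp (-(t*x)) = 6 / x^4 := by
  have h := Real.integral_rpow_mul_exp_neg_mul_Ioi (by norm_num : (0:ℝ) < 4) hx
  have heq : ∀ t ∈ Ioi (0:ℝ), t ^ ((4:ℝ) - 1) * Real.exp (-(x*t))
      = t^3 * Real.exp (-(t*x)) := by
    intro t ht
    rw [show (4:ℝ) - 1 = ((3:ℕ):ℝ) by norm_num, Real.rpow_natCast, mul_comm x t]
  rw [setIntegral_congr_fun measurableSet_Ioi heq] at h
  rw [h, show (4:ℝ) = ((4:ℕ):ℝ) by norm_num, Real.rpow_natCast,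
    show ((4:ℕ):ℝ) = ((3:ℕ):ℝ)+1 by norm_num, Real.Gamma_nat_eq_factorial]
  have : x ≠ 0 := ne_of_gt hx
  rw [Nat.factorial]
  norm_num
  field_simp

lemma laplace_sin4 {t : ℝ} (ht : 0 < t) :
    ∫ x in Ioi (0:ℝ), Real.exp (-(t*x)) * Real.sin x ^ 4
      = 3/(8*t) - t/(2*(t^2+4)) + t/(8*(t^2+16)) := by
  have heq : ∀ x ∈ Ioi (0:ℝ), Real.exp (-(t*x)) * Real.sin x ^ 4
      = (3/8 * (Real.exp (-(t*x)) * Real.cos (0*x))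
          - 1/2 * (Real.exp (-(t*x)) * Real.cos (2*x)))
        + 1/8 * (Real.exp (-(t*x)) * Real.cos (4*x)) := by
    intro x _
    rw [sin_pow_four_eq, zero_mul, Real.cos_zero]
    ring
  have hA := (laplace_integrable ht 0).const_mul (3/8)
  have hB := (laplace_integrable ht 2).const_mul (1/2)
  have hC := (laplace_integrable ht 4).const_mul (1/8)
  have hAB : Integrable (fun x : ℝ => 3/8 * (Real.exp (-(t*x)) * Real.cos (0*x))
      - 1/2 * (Real.exp (-(t*x)) * Real.cos (2*x))) (volume.restrict (Ioi 0)) := hA.sub hB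
  rw [setIntegral_congr_fun measurableSet_Ioi heq, integral_add hAB hC,
    integral_sub hA hB, integral_const_mul, integral_const_mul, integral_const_mul,
    laplace_cos ht 0, laplace_cos ht 2, laplace_cos ht 4]
  have h1 : t ≠ 0 := ne_of_gt ht
  have h2 : t^2 + 4 ≠ 0 := by positivity
  have h3 : t^2 + 16 ≠ 0 := by positivity
  norm_num
  field_simp

lemma inner_eval {t : ℝ} (ht : 0 < t) :
    ∫ x in Ioi (0:ℝ), t^3 * Real.exp (-(t*x)) * Real.sin x ^ 4
      = -8/(t^2+4) + 32/(t^2+16) := by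
  have h : ∀ x : ℝ, t^3 * Real.exp (-(t*x)) * Real.sin x ^ 4
      = t^3 * (Real.exp (-(t*x)) * Real.sin x ^ 4) := fun x => by ring
  simp_rw [h]
  rw [integral_const_mul, laplace_sin4 ht]
  have h1 : t ≠ 0 := ne_of_gt ht
  have h2 : t^2 + 4 ≠ 0 := by positivity
  have h3 : t^2 + 16 ≠ 0 := by positivity
  field_simp
  ring

lemma sin4_section_integrable {t : ℝ} (ht : 0 < t) :
    IntegrableOn (fun x : ℝ => t^3 * Real.exp (-(t*x)) * Real.sin x ^ 4) (Ioi 0) := by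
  refine Integrable.mono ((exp_neg_integrableOn_Ioi 0 ht).const_mul (t^3)) ?_ ?_
  · exact ((continuous_const.mul (Real.continuous_exp.comp
      (continuous_const.mul continuous_id).neg)).mul
      (Real.continuous_sin.pow 4)).aestronglyMeasurable
  · filter_upwards with x
    have h1 : |Real.sin x ^ 4| ≤ 1 := by
      rw [abs_of_nonneg (by positivity)]; exact sin_pow_four_le_one x
    simp only [norm_mul, Real.norm_eq_abs, Real.abs_exp, neg_mul]
    have h2 : |t^3| = t^3 := abs_of_pos (by positivity)
    rw [h2]
    nlinarith [mul_pos (pow_pos ht 3) (Real.exp_pos (-(t*x))),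
      mul_nonneg (mul_pos (pow_pos ht 3) (Real.exp_pos (-(t*x)))).le
        (sub_nonneg.2 h1)]

lemma g_integrable :
    IntegrableOn (fun t : ℝ => -8/(t^2+4) + 32/(t^2+16)) (Ioi 0) := by
  have h4 := (integrableOn_inv_sq_add (show (1:ℝ) ≤ 2 by norm_num)).const_mul (-8)
  have h16 := (integrableOn_inv_sq_add (show (1:ℝ) ≤ 4 by norm_num)).const_mul (32)
  have := h4.add h16
  refine this.congr (Filter.Eventually.of_forall fun t => ?_)
  simp only [Pi.add_apply]
  norm_num [div_eq_mul_inv]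

lemma g_integral :
    ∫ t in Ioi (0:ℝ), (-8/(t^2+4) + 32/(t^2+16)) = 2 * π := by
  have h4 := (integrableOn_inv_sq_add (show (1:ℝ) ≤ 2 by norm_num)).const_mul (-8)
  have h16 := (integrableOn_inv_sq_add (show (1:ℝ) ≤ 4 by norm_num)).const_mul (32)
  have heq : ∀ t ∈ Ioi (0:ℝ), -8/(t^2+4) + 32/(t^2+16)
      = -8 * (t^2+2^2)⁻¹ + 32 * (t^2+4^2)⁻¹ := by
    intro t _
    norm_num [div_eq_mul_inv]
  rw [setIntegral_congr_fun measurableSet_Ioi heq, integral_add h4 h16,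
    integral_const_mul, integral_const_mul,
    integral_inv_sq_add (show (1:ℝ) ≤ 2 by norm_num),
    integral_inv_sq_add (show (1:ℝ) ≤ 4 by norm_num)]
  ring

/-- ∫₀^∞ sin⁴x/x⁴ dx = π/3. -/
theorem sin_pow_four_div_pow_four_integral :
    ∫ x in Set.Ioi (0:ℝ), Real.sin x ^ 4 / x ^ 4 = π / 3 := by
  set μ := volume.restrict (Ioi (0:ℝ)) with hμ
  set f : ℝ → ℝ → ℝ := fun t x => t^3 * Real.exp (-(t*x)) * Real.sin x ^ 4 with hf
  have hcont : Continuous (Function.uncurry f) := by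
    apply ((continuous_fst.pow 3).mul
      (Real.continuous_exp.comp (continuous_fst.mul continuous_snd).neg)).mul
      ((Real.continuous_sin.comp continuous_snd).pow 4)
  have hint : Integrable (Function.uncurry f) (μ.prod μ) := by
    rw [integrable_prod_iff hcont.aestronglyMeasurable]
    constructor
    · filter_upwards [ae_restrict_mem measurableSet_Ioi] with t ht
      exact sin4_section_integrable ht
    · have hg := g_integrable
      refine hg.congr ?_
      filter_upwards [ae_restrict_mem measurableSet_Ioi] with t ht
      have hnorm : ∀ x : ℝ, ‖f t x‖ = f t x := by
        intro x
        rw [Real.norm_eq_abs, abs_of_nonneg]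
        have := Real.exp_pos (-(t*x))
        have h3 := pow_pos (show (0:ℝ) < t from ht) 3
        positivity
      calc -8/(t^2+4) + 32/(t^2+16) = ∫ x, f t x ∂μ := by
            rw [hμ]; exact (inner_eval ht).symm
        _ = ∫ x, ‖Function.uncurry f (t, x)‖ ∂μ := by
            refine integral_congr_ae (Filter.Eventually.of_forall fun x => ?_)
            exact (hnorm x).symm
  have step1 : ∫ x in Ioi (0:ℝ), Real.sin x ^ 4 / x ^ 4
      = ∫ x in Ioi (0:ℝ), (1/6) * ∫ t in Ioi (0:ℝ), f t x := by
    refine setIntegral_congr_fun measurableSet_Ioi (fun x hx => ?_)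
    have hx0 : (0:ℝ) < x := hx
    have : ∫ t in Ioi (0:ℝ), f t x
        = (∫ t in Ioi (0:ℝ), t^3 * Real.exp (-(t*x))) * Real.sin x ^ 4 :=
      integral_mul_const _ _
    rw [this, integral_cube_exp hx0]
    have hxne : x ≠ 0 := ne_of_gt hx0
    field_simp
  rw [step1, integral_const_mul, ← hμ, ← integral_integral_swap hint]
  have step2 : ∫ t, (∫ x, f t x ∂μ) ∂μ = 2 * π := by
    rw [hμ]
    have heq : ∀ t ∈ Ioi (0:ℝ), (∫ x in Ioi (0:ℝ), f t x)
        = -8/(t^2+4) + 32/(t^2+16) := fun t ht => inner_eval ht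
    rw [setIntegral_congr_fun measurableSet_Ioi heq, g_integral]
  rw [step2]
  ring
end

section
/- The integral ∫₀^∞ sin³(x)/x² dx equals (3/4)·ln 3. -/
open Real MeasureTheory

section aux
open Set Filter Topology

lemma exp_neg_mul_tendsto (t : ℝ) (ht : 0 < t) :
    Tendsto (fun x : ℝ => Real.exp (-(t * x))) atTop (𝓝 0) := by
  have h : Tendsto (fun x : ℝ => t * x) atTop atTop :=
    Tendsto.const_mul_atTop ht tendsto_id
  have := Real.tendsto_exp_atBot.comp (tendsto_neg_atTop_atBot.comp h)
  simpa [Function.comp_def] using this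

lemma integrableOn_exp_sin (t a : ℝ) (ht : 0 < t) :
    IntegrableOn (fun x => Real.exp (-(t * x)) * Real.sin (a * x)) (Set.Ioi 0) := by
  apply (exp_neg_integrableOn_Ioi 0 ht).mono'
  · exact (Continuous.mul (by continuity) (by continuity)).aestronglyMeasurable
  · filter_upwards with x
    rw [norm_mul, Real.norm_eq_abs, Real.norm_eq_abs, abs_of_pos (Real.exp_pos _), neg_mul]
    nlinarith [abs_sin_le_one (a*x), Real.exp_pos (-(t*x)), abs_nonneg (Real.sin (a*x))]

lemma integral_exp_neg_mul_sin (t a : ℝ) (ht : 0 < t) :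
    ∫ x in Set.Ioi (0:ℝ), Real.exp (-(t * x)) * Real.sin (a * x) = a / (t ^ 2 + a ^ 2) := by
  have hd : 0 < t ^ 2 + a ^ 2 := by positivity
  set F : ℝ → ℝ := fun x =>
    -(Real.exp (-(t * x)) * (t * Real.sin (a * x) + a * Real.cos (a * x))) / (t ^ 2 + a ^ 2) with hF
  have hderiv : ∀ x ∈ Set.Ici (0:ℝ), HasDerivAt F (Real.exp (-(t * x)) * Real.sin (a * x)) x := by
    intro x _
    have h1 : HasDerivAt (fun x : ℝ => -(t * x)) (-t) x := by
      exact ((hasDerivAt_id x).const_mul t).neg.congr_deriv (by simp)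
    have he : HasDerivAt (fun x : ℝ => Real.exp (-(t * x))) (Real.exp (-(t * x)) * -t) x :=
      h1.exp
    have h2 : HasDerivAt (fun x : ℝ => a * x) a x := by
      simpa using (hasDerivAt_id x).const_mul a
    have hs : HasDerivAt (fun x : ℝ => Real.sin (a * x)) (Real.cos (a * x) * a) x := h2.sin
    have hc : HasDerivAt (fun x : ℝ => Real.cos (a * x)) (-Real.sin (a * x) * a) x := h2.cos
    have := (((he.mul ((hs.const_mul t).add (hc.const_mul a))).neg).div_const (t ^ 2 + a ^ 2))
    refine this.congr_deriv ?_
    simp only [Pi.add_apply]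
    field_simp
    ring
  have htend : Tendsto F atTop (𝓝 0) := by
    have hbd : IsBoundedUnder (· ≤ ·) atTop
        (fun x => ‖t * Real.sin (a * x) + a * Real.cos (a * x)‖) := by
      refine isBoundedUnder_of ⟨|t| + |a|, fun x => ?_⟩
      calc ‖t * Real.sin (a * x) + a * Real.cos (a * x)‖
            ≤ |t * Real.sin (a * x)| + |a * Real.cos (a * x)| := abs_add_le _ _
          _ ≤ |t| + |a| := by
              rw [abs_mul, abs_mul]
              nlinarith [abs_sin_le_one (a*x), abs_cos_le_one (a*x), abs_nonneg t, abs_nonneg a, abs_nonneg (Real.sin (a*x)), abs_nonneg (Real.cos (a*x))]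
    have hb := ((exp_neg_mul_tendsto t ht).zero_mul_isBoundedUnder_le hbd).neg
    simpa using hb.div_const (t ^ 2 + a ^ 2)
  have := integral_Ioi_of_hasDerivAt_of_tendsto' hderiv (integrableOn_exp_sin t a ht) htend
  rw [this, hF]
  simp
  field_simp



lemma sin_cube (x : ℝ) : Real.sin x ^ 3 = (3 * Real.sin x - Real.sin (3 * x)) / 4 := by
  have := Real.sin_three_mul x
  linarith

lemma integrableOn_exp_sin_cube (t : ℝ) (ht : 0 < t) :
    IntegrableOn (fun x => Real.exp (-(t * x)) * Real.sin x ^ 3) (Set.Ioi 0) := by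
  have h1 := (integrableOn_exp_sin t 1 ht).const_mul (3/4 : ℝ)
  have h3 := (integrableOn_exp_sin t 3 ht).const_mul (1/4 : ℝ)
  have := h1.sub h3
  apply this.congr
  filter_upwards with x
  simp only [Pi.sub_apply]
  rw [sin_cube, one_mul]
  ring

lemma integral_exp_sin_cube (t : ℝ) (ht : 0 < t) :
    ∫ x in Set.Ioi (0:ℝ), Real.exp (-(t * x)) * Real.sin x ^ 3
      = 6 / ((t ^ 2 + 1) * (t ^ 2 + 9)) := by
  have h1 := integrableOn_exp_sin t 1 ht
  have h3 := integrableOn_exp_sin t 3 ht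
  have heq : ∀ x ∈ Set.Ioi (0:ℝ), Real.exp (-(t * x)) * Real.sin x ^ 3
      = (3/4 : ℝ) * (Real.exp (-(t * x)) * Real.sin (1 * x))
        - (1/4 : ℝ) * (Real.exp (-(t * x)) * Real.sin (3 * x)) := by
    intro x _
    rw [sin_cube, one_mul]
    ring
  rw [setIntegral_congr_fun measurableSet_Ioi heq, integral_sub (h1.const_mul _) (h3.const_mul _),
    MeasureTheory.integral_const_mul, MeasureTheory.integral_const_mul, integral_exp_neg_mul_sin t 1 ht,
    integral_exp_neg_mul_sin t 3 ht]
  have e1 : (0:ℝ) < t ^ 2 + 1 := by positivity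
  have e3 : (0:ℝ) < t ^ 2 + 9 := by positivity
  field_simp
  ring

lemma tendsto_linear_exp (x : ℝ) (hx : 0 < x) :
    Tendsto (fun t : ℝ => (t / x + 1 / x ^ 2) * Real.exp (-(x * t))) atTop (𝓝 0) := by
  have base : Tendsto (fun u : ℝ => (u / x ^ 2 + 1 / x ^ 2) * Real.exp (-u)) atTop (𝓝 0) := by
    have h1 : Tendsto (fun u : ℝ => u * Real.exp (-u)) atTop (𝓝 0) := by
      simpa using Real.tendsto_pow_mul_exp_neg_atTop_nhds_zero 1
    have h0 : Tendsto (fun u : ℝ => Real.exp (-u)) atTop (𝓝 0) := by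
      simpa using Real.tendsto_pow_mul_exp_neg_atTop_nhds_zero 0
    have := (h1.const_mul (1 / x ^ 2)).add (h0.const_mul (1 / x ^ 2))
    simp only [mul_zero, add_zero, zero_add] at this
    refine Tendsto.congr (fun u => ?_) this
    ring
  have hcomp : Tendsto (fun t : ℝ => x * t) atTop atTop :=
    Tendsto.const_mul_atTop hx tendsto_id
  have := base.comp hcomp
  refine Tendsto.congr (fun t => ?_) this
  simp only [Function.comp]
  field_simp

lemma hasDerivAt_G (x : ℝ) (hx : 0 < x) (t : ℝ) :
    HasDerivAt (fun t : ℝ => -((t / x + 1 / x ^ 2) * Real.exp (-(x * t))))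
      (t * Real.exp (-(x * t))) t := by
  have h1 : HasDerivAt (fun t : ℝ => -(x * t)) (-x) t := by
    exact ((hasDerivAt_id t).const_mul x).neg.congr_deriv (by simp)
  have he : HasDerivAt (fun t : ℝ => Real.exp (-(x * t))) (Real.exp (-(x * t)) * -x) t := h1.exp
  have hp : HasDerivAt (fun t : ℝ => t / x + 1 / x ^ 2) (1 / x) t := by
    have := ((hasDerivAt_id t).div_const x).add_const (1 / x ^ 2)
    simpa [one_div] using this
  have := (hp.mul he).neg
  refine this.congr_deriv ?_
  field_simp
  ring

lemma integrableOn_mul_exp (x : ℝ) (hx : 0 < x) :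
    IntegrableOn (fun t : ℝ => t * Real.exp (-(x * t))) (Set.Ioi 0) := by
  apply integrableOn_Ioi_deriv_of_nonneg' (g := fun t : ℝ => -((t / x + 1 / x ^ 2) * Real.exp (-(x * t))))
    (fun t _ => hasDerivAt_G x hx t) ?_ (by simpa using (tendsto_linear_exp x hx).neg)
  intro t ht
  have h1 : (0:ℝ) < t := ht
  have := Real.exp_pos (-(x * t))
  positivity

lemma integral_mul_exp (x : ℝ) (hx : 0 < x) :
    ∫ t in Set.Ioi (0:ℝ), t * Real.exp (-(x * t)) = 1 / x ^ 2 := by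
  have := integral_Ioi_of_hasDerivAt_of_nonneg' (fun t _ => hasDerivAt_G x hx t)
    (fun t ht => by have := Real.exp_pos (-(x * t)); have : (0:ℝ) < t := ht; positivity)
    (by simpa using (tendsto_linear_exp x hx).neg)
  rw [this]
  simp

set_option maxHeartbeats 2000000 in
lemma integral_rational : ∫ t in Set.Ioi (0:ℝ), t * (6 / ((t ^ 2 + 1) * (t ^ 2 + 9)))
    = 3 / 4 * Real.log 3 := by
  set H : ℝ → ℝ := fun t => 3 / 8 * (Real.log (t ^ 2 + 1) - Real.log (t ^ 2 + 9)) with hH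
  have hderiv : ∀ t ∈ Set.Ici (0:ℝ),
      HasDerivAt H (t * (6 / ((t ^ 2 + 1) * (t ^ 2 + 9)))) t := by
    intro t _
    have e1 : (0:ℝ) < t ^ 2 + 1 := by positivity
    have e9 : (0:ℝ) < t ^ 2 + 9 := by positivity
    have hp : HasDerivAt (fun t : ℝ => t ^ 2 + 1) (2 * t) t := by
      simpa using (hasDerivAt_pow 2 t).add_const 1
    have hq : HasDerivAt (fun t : ℝ => t ^ 2 + 9) (2 * t) t := by
      simpa using (hasDerivAt_pow 2 t).add_const 9
    have hl1 : HasDerivAt (fun t : ℝ => Real.log (t ^ 2 + 1)) (2 * t / (t ^ 2 + 1)) t :=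
      hp.log e1.ne'
    have hl9 : HasDerivAt (fun t : ℝ => Real.log (t ^ 2 + 9)) (2 * t / (t ^ 2 + 9)) t :=
      hq.log e9.ne'
    have := ((hl1.sub hl9).const_mul (3/8 : ℝ))
    refine this.congr_deriv ?_
    field_simp
    ring
  have htend : Tendsto H atTop (𝓝 0) := by
    have h9 : Tendsto (fun t : ℝ => t ^ 2 + 9) atTop atTop :=
      (tendsto_pow_atTop two_ne_zero).atTop_add tendsto_const_nhds
    have hfrac : Tendsto (fun t : ℝ => 1 - 8 / (t ^ 2 + 9)) atTop (𝓝 1) := by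
      have h0 : Tendsto (fun t : ℝ => 8 / (t ^ 2 + 9)) atTop (𝓝 0) :=
        Tendsto.div_atTop tendsto_const_nhds h9
      simpa using (tendsto_const_nhds (x := (1:ℝ))).sub h0
    have hlog : Tendsto (fun t : ℝ => Real.log (1 - 8 / (t ^ 2 + 9))) atTop (𝓝 0) := by
      have := (Real.continuousAt_log one_ne_zero).tendsto.comp hfrac
      simpa [Function.comp_def] using this
    refine Tendsto.congr (fun t => ?_) (by simpa using hlog.const_mul (3/8 : ℝ))
    have e1 : (0:ℝ) < t ^ 2 + 1 := by positivity
    have e9 : (0:ℝ) < t ^ 2 + 9 := by positivity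
    have h8 : (1 : ℝ) - 8 / (t ^ 2 + 9) = (t ^ 2 + 1) / (t ^ 2 + 9) := by
      rw [eq_div_iff e9.ne']
      field_simp
      ring
    show 3 / 8 * Real.log (1 - 8 / (t ^ 2 + 9)) = H t
    rw [h8, Real.log_div e1.ne' e9.ne', hH]
  have hpos : ∀ t ∈ Set.Ioi (0:ℝ), 0 ≤ t * (6 / ((t ^ 2 + 1) * (t ^ 2 + 9))) := by
    intro t ht
    have : (0:ℝ) < t := ht
    positivity
  rw [integral_Ioi_of_hasDerivAt_of_nonneg' hderiv hpos htend]
  have : H 0 = -(3 / 4 * Real.log 3) := by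
    rw [hH]
    norm_num
    rw [show (9:ℝ) = 3 ^ 2 by norm_num, Real.log_pow]
    push_cast
    ring
  rw [this]
  ring



lemma integrable_majorant :
    IntegrableOn (fun x : ℝ => |Real.sin x| ^ 3 * (1 / x ^ 2)) (Set.Ioi 0) := by
  have hmeas : AEStronglyMeasurable (fun x : ℝ => |Real.sin x| ^ 3 * (1 / x ^ 2))
      (volume.restrict (Set.Ioi 0)) := by
    apply Measurable.aestronglyMeasurable
    exact ((Real.continuous_sin.abs.pow 3).measurable).mul
      (measurable_const.div ((measurable_id.pow_const 2)))
  rw [show Set.Ioi (0:ℝ) = Set.Ioc 0 1 ∪ Set.Ioi 1 from (Set.Ioc_union_Ioi_eq_Ioi zero_le_one).symm]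
  apply IntegrableOn.union
  · apply Integrable.mono' (g := fun _ : ℝ => (1:ℝ))
    · exact integrableOn_const measure_Ioc_lt_top.ne
    · exact hmeas.mono_set Ioc_subset_Ioi_self
    · filter_upwards [ae_restrict_mem measurableSet_Ioc] with x hx
      have hx0 : 0 < x := hx.1
      have hx1 : x ≤ 1 := hx.2
      have hs : |Real.sin x| ≤ x := by simpa [abs_of_pos hx0] using Real.abs_sin_le_abs (x := x)
      have hsn : 0 ≤ |Real.sin x| := abs_nonneg _
      rw [Real.norm_eq_abs, abs_of_nonneg (by positivity)]
      rw [mul_one_div, div_le_one (by positivity)]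
      calc |Real.sin x| ^ 3 ≤ x ^ 3 := by gcongr
        _ ≤ x ^ 2 := by nlinarith
  · apply Integrable.mono' (g := fun x : ℝ => x ^ (-2 : ℝ))
    · exact integrableOn_Ioi_rpow_of_lt (by norm_num) one_pos
    · exact hmeas.mono_set (Set.Ioi_subset_Ioi zero_le_one)
    · filter_upwards [ae_restrict_mem measurableSet_Ioi] with x hx
      have hx0 : (0:ℝ) < x := lt_trans one_pos hx
      have : x ^ (-2 : ℝ) = 1 / x ^ 2 := by
        rw [Real.rpow_neg hx0.le, ← Real.rpow_natCast x 2]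
        norm_num
      rw [Real.norm_eq_abs, abs_of_nonneg (by positivity), this, mul_one_div, one_div]
      rw [div_le_iff₀ (by positivity), inv_mul_cancel₀ (by positivity)]
      calc |Real.sin x| ^ 3 ≤ 1 ^ 3 := by gcongr; exact abs_sin_le_one x
        _ = 1 := one_pow 3

set_option maxHeartbeats 1000000 in
lemma key_integrable :
    Integrable (Function.uncurry fun x t : ℝ => Real.sin x ^ 3 * (t * Real.exp (-(x * t))))
      ((volume.restrict (Set.Ioi 0)).prod (volume.restrict (Set.Ioi 0))) := by
  have hmeas : AEStronglyMeasurable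
      (Function.uncurry fun x t : ℝ => Real.sin x ^ 3 * (t * Real.exp (-(x * t))))
      ((volume.restrict (Set.Ioi 0)).prod (volume.restrict (Set.Ioi 0))) := by
    apply Continuous.aestronglyMeasurable
    fun_prop
  rw [integrable_prod_iff hmeas]
  constructor
  · filter_upwards [ae_restrict_mem measurableSet_Ioi] with x hx
    simp only [Function.uncurry_apply_pair]
    exact (integrableOn_mul_exp x hx).const_mul _
  · apply integrable_majorant.congr
    filter_upwards [ae_restrict_mem measurableSet_Ioi] with x hx
    simp only [Function.uncurry_apply_pair]
    have h1 : ∫ t in Set.Ioi (0:ℝ), ‖Real.sin x ^ 3 * (t * Real.exp (-(x * t)))‖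
        = ∫ t in Set.Ioi (0:ℝ), |Real.sin x| ^ 3 * (t * Real.exp (-(x * t))) := by
      apply setIntegral_congr_fun measurableSet_Ioi
      intro t ht
      have ht0 : (0:ℝ) < t := ht
      dsimp only
      rw [norm_mul, Real.norm_eq_abs, Real.norm_eq_abs, abs_pow, abs_of_pos
        (by positivity : (0:ℝ) < t * Real.exp (-(x * t)))]
    rw [h1, MeasureTheory.integral_const_mul, integral_mul_exp x hx]

end aux

open Set Filter Topology in
/-- ∫₀^∞ sin³x/x² dx = (3/4)·ln 3. -/
theorem sin_cube_div_sq_integral :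
    ∫ x in Set.Ioi (0:ℝ), Real.sin x ^ 3 / x ^ 2 = 3 / 4 * Real.log 3 := by
  have step1 : ∫ x in Set.Ioi (0:ℝ), Real.sin x ^ 3 / x ^ 2
      = ∫ x in Set.Ioi (0:ℝ), ∫ t in Set.Ioi (0:ℝ),
          Real.sin x ^ 3 * (t * Real.exp (-(x * t))) := by
    apply setIntegral_congr_fun measurableSet_Ioi
    intro x hx
    show Real.sin x ^ 3 / x ^ 2
        = ∫ t in Set.Ioi (0:ℝ), Real.sin x ^ 3 * (t * Real.exp (-(x * t)))
    rw [MeasureTheory.integral_const_mul, integral_mul_exp x hx, mul_one_div]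
  rw [step1, MeasureTheory.integral_integral_swap key_integrable]
  have step2 : ∀ t ∈ Set.Ioi (0:ℝ), (∫ x in Set.Ioi (0:ℝ),
      Real.sin x ^ 3 * (t * Real.exp (-(x * t)))) = t * (6 / ((t ^ 2 + 1) * (t ^ 2 + 9))) := by
    intro t ht
    have : ∀ x : ℝ, Real.sin x ^ 3 * (t * Real.exp (-(x * t)))
        = t * (Real.exp (-(t * x)) * Real.sin x ^ 3) := by
      intro x; rw [mul_comm x t]; ring
    rw [show (fun x : ℝ => Real.sin x ^ 3 * (t * Real.exp (-(x * t))))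
        = fun x : ℝ => t * (Real.exp (-(t * x)) * Real.sin x ^ 3) from funext this]
    rw [MeasureTheory.integral_const_mul, integral_exp_sin_cube t ht]
  rw [setIntegral_congr_fun measurableSet_Ioi step2, integral_rational]
end

section
/- The integral ∫₀^∞ sin⁵(x)/x³ dx equals 5π/32. -/
open Real MeasureTheory Set Filter

lemma aux_arctan_deriv {a : ℝ} (ha : 0 < a) : ∀ t ∈ Ici (0:ℝ),
    HasDerivAt (fun t : ℝ => a⁻¹ * arctan (t / a)) ((a ^ 2 + t ^ 2)⁻¹) t := by
  intro t _
  have h1 : HasDerivAt (fun t : ℝ => t / a) (1 / a) t := (hasDerivAt_id t).div_const a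
  have h2 := (Real.hasDerivAt_arctan (t / a)).comp t h1
  have h3 := h2.const_mul a⁻¹
  refine h3.congr_deriv ?_
  field_simp

lemma aux_arctan_tendsto {a : ℝ} (ha : 0 < a) :
    Tendsto (fun t : ℝ => a⁻¹ * arctan (t / a)) atTop (nhds (a⁻¹ * (π / 2))) := by
  have h1 : Tendsto (fun t : ℝ => t / a) atTop atTop := tendsto_id.atTop_div_const ha
  exact ((Real.tendsto_arctan_atTop.mono_right nhdsWithin_le_nhds).comp h1).const_mul a⁻¹

lemma aux_inv_sq_add_integrable {a : ℝ} (ha : 0 < a) :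
    IntegrableOn (fun t : ℝ => (a ^ 2 + t ^ 2)⁻¹) (Ioi 0) :=
  integrableOn_Ioi_deriv_of_nonneg' (aux_arctan_deriv ha) (fun t _ => by positivity)
    (aux_arctan_tendsto ha)

lemma aux_inv_sq_add_integral {a : ℝ} (ha : 0 < a) :
    ∫ t in Ioi (0:ℝ), (a ^ 2 + t ^ 2)⁻¹ = π / (2 * a) := by
  rw [integral_Ioi_of_hasDerivAt_of_nonneg' (aux_arctan_deriv ha) (fun t _ => by positivity)
    (aux_arctan_tendsto ha), zero_div, arctan_zero, mul_zero, sub_zero, inv_mul_eq_div, div_div]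

lemma aux_exp_sin_integrable {t k : ℝ} (ht : 0 < t) :
    IntegrableOn (fun x : ℝ => exp (-(t * x)) * sin (k * x)) (Ioi 0) := by
  refine (exp_neg_integrableOn_Ioi 0 ht).mono' ?_ ?_
  · exact (Continuous.mul (by continuity) (by continuity)).aestronglyMeasurable
  · filter_upwards with x
    rw [norm_mul, norm_eq_abs, norm_eq_abs, abs_exp, neg_mul]
    calc rexp (-(t * x)) * |sin (k * x)| ≤ rexp (-(t * x)) * 1 := by
          exact mul_le_mul_of_nonneg_left (abs_sin_le_one _) (exp_pos _).le
      _ = rexp (-(t * x)) := mul_one _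

lemma aux_exp_sin_integral {t : ℝ} (ht : 0 < t) (k : ℝ) :
    ∫ x in Ioi (0:ℝ), exp (-(t * x)) * sin (k * x) = k / (t ^ 2 + k ^ 2) := by
  have hpos : 0 < t ^ 2 + k ^ 2 := by positivity
  set G : ℝ → ℝ := fun x =>
    -(exp (-(t * x)) * (t * sin (k * x) + k * cos (k * x))) / (t ^ 2 + k ^ 2) with hG
  have hderiv : ∀ x ∈ Ici (0:ℝ), HasDerivAt G (exp (-(t * x)) * sin (k * x)) x := by
    intro x _
    have he : HasDerivAt (fun x : ℝ => exp (-(t * x))) (-t * exp (-(t * x))) x := by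
      have h1 : HasDerivAt (fun x : ℝ => -(t * x)) (-t) x := by
        exact ((hasDerivAt_id x).const_mul t).neg.congr_deriv (by simp)
      simpa [mul_comm] using h1.exp
    have hs : HasDerivAt (fun x : ℝ => sin (k * x)) (cos (k * x) * k) x := by
      have h1 : HasDerivAt (fun x : ℝ => k * x) k x := by
        simpa using (hasDerivAt_id x).const_mul k
      exact (Real.hasDerivAt_sin (k * x)).comp x h1
    have hc : HasDerivAt (fun x : ℝ => cos (k * x)) (-sin (k * x) * k) x := by
      have h1 : HasDerivAt (fun x : ℝ => k * x) k x := by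
        simpa using (hasDerivAt_id x).const_mul k
      exact (Real.hasDerivAt_cos (k * x)).comp x h1
    have hsum : HasDerivAt (fun x : ℝ => t * sin (k * x) + k * cos (k * x))
        (t * (cos (k * x) * k) + k * (-sin (k * x) * k)) x :=
      (hs.const_mul t).add (hc.const_mul k)
    have hmul := (he.mul hsum).neg.div_const (t ^ 2 + k ^ 2)
    refine hmul.congr_deriv ?_
    field_simp
    ring
  have htend : Tendsto G atTop (nhds 0) := by
    have hexp : Tendsto (fun x : ℝ => exp (-(t * x))) atTop (nhds 0) := by
      have h1 : Tendsto (fun x : ℝ => t * x) atTop atTop :=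
        Tendsto.const_mul_atTop ht tendsto_id
      exact Real.tendsto_exp_atBot.comp (tendsto_neg_atTop_atBot.comp h1)
    have hb : Tendsto (fun x : ℝ => exp (-(t * x)) * ((|t| + |k|) / (t ^ 2 + k ^ 2)))
        atTop (nhds 0) := by simpa using hexp.mul_const ((|t| + |k|) / (t ^ 2 + k ^ 2))
    refine squeeze_zero_norm (fun x => ?_) hb
    rw [hG]
    simp only [norm_div, norm_neg, norm_mul, norm_eq_abs, abs_exp]
    rw [abs_of_pos hpos, div_le_iff₀ hpos, mul_assoc, div_mul_cancel₀ _ hpos.ne']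
    refine mul_le_mul_of_nonneg_left ?_ (exp_pos _).le
    calc |t * sin (k * x) + k * cos (k * x)|
        ≤ |t * sin (k * x)| + |k * cos (k * x)| := abs_add_le _ _
      _ ≤ |t| * 1 + |k| * 1 := by
          rw [abs_mul, abs_mul]
          gcongr
          · exact abs_sin_le_one _
          · exact abs_cos_le_one _
      _ = |t| + |k| := by ring
  rw [integral_Ioi_of_hasDerivAt_of_tendsto' hderiv (aux_exp_sin_integrable ht) htend]
  simp [hG]
  field_simp

lemma aux_sin_pow_five (x : ℝ) :
    sin x ^ 5 = (10 * sin (1 * x) - 5 * sin (3 * x) + sin (5 * x)) / 16 := by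
  have h5 : sin (5 * x) = sin (3 * x) * cos (2 * x) + cos (3 * x) * sin (2 * x) := by
    rw [show (5:ℝ) * x = 3 * x + 2 * x by ring, sin_add]
  rw [h5, sin_three_mul, cos_three_mul, sin_two_mul, cos_two_mul, one_mul]
  have hsc := sin_sq_add_cos_sq x
  linear_combination (sin x ^ 3 - sin x / 2 - sin x * cos x ^ 2 / 2) * hsc

lemma aux_exp_sin5_integrable {t : ℝ} (ht : 0 < t) :
    IntegrableOn (fun x : ℝ => exp (-(t * x)) * sin x ^ 5) (Ioi 0) := by
  refine (exp_neg_integrableOn_Ioi 0 ht).mono' ?_ ?_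
  · exact (Continuous.mul (by continuity) (by continuity)).aestronglyMeasurable
  · filter_upwards with x
    rw [norm_mul, norm_eq_abs, norm_eq_abs, abs_exp, neg_mul]
    calc rexp (-(t * x)) * |sin x ^ 5| ≤ rexp (-(t * x)) * 1 := by
          refine mul_le_mul_of_nonneg_left ?_ (exp_pos _).le
          rw [abs_pow]
          exact pow_le_one₀ (abs_nonneg _) (abs_sin_le_one _)
      _ = rexp (-(t * x)) := mul_one _

lemma aux_exp_sin5_integral {t : ℝ} (ht : 0 < t) :
    ∫ x in Ioi (0:ℝ), exp (-(t * x)) * sin x ^ 5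
      = (10 / (t ^ 2 + 1) - 15 / (t ^ 2 + 9) + 5 / (t ^ 2 + 25)) / 16 := by
  have hcong : ∀ x ∈ Ioi (0:ℝ), exp (-(t * x)) * sin x ^ 5
      = (10 * (exp (-(t * x)) * sin (1 * x)) - 5 * (exp (-(t * x)) * sin (3 * x))
          + exp (-(t * x)) * sin (5 * x)) / 16 := by
    intro x _
    rw [aux_sin_pow_five x]
    ring
  rw [setIntegral_congr_fun measurableSet_Ioi hcong]
  have i1 := aux_exp_sin_integrable (t := t) (k := 1) ht
  have i3 := aux_exp_sin_integrable (t := t) (k := 3) ht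
  have i5 := aux_exp_sin_integrable (t := t) (k := 5) ht
  have hsub : IntegrableOn (fun x : ℝ => 10 * (exp (-(t * x)) * sin (1 * x))
      - 5 * (exp (-(t * x)) * sin (3 * x))) (Ioi 0) := (i1.const_mul 10).sub (i3.const_mul 5)
  rw [integral_div, integral_add hsub i5]
  rw [integral_sub (i1.const_mul 10) (i3.const_mul 5), integral_const_mul, integral_const_mul,
    aux_exp_sin_integral ht 1, aux_exp_sin_integral ht 3, aux_exp_sin_integral ht 5]
  have h1 : (0:ℝ) < t ^ 2 + 1 := by positivity
  have h9 : (0:ℝ) < t ^ 2 + 9 := by positivity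
  have h25 : (0:ℝ) < t ^ 2 + 25 := by positivity
  rw [show (1:ℝ)^2 = 1 by norm_num, show (3:ℝ)^2 = 9 by norm_num,
    show (5:ℝ)^2 = 25 by norm_num]
  field_simp
  ring

lemma aux_kernel_integrable {x : ℝ} (hx : 0 < x) :
    IntegrableOn (fun t : ℝ => t ^ 2 * exp (-(x * t))) (Ioi 0) := by
  have h := integrableOn_rpow_mul_exp_neg_mul_rpow (s := 2) (p := 1)
    (by norm_num) one_pos hx
  refine h.congr_fun (fun t ht => ?_) measurableSet_Ioi
  beta_reduce
  rw [rpow_one, rpow_two, neg_mul]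

lemma aux_kernel_integral {x : ℝ} (hx : 0 < x) :
    ∫ t in Ioi (0:ℝ), t ^ 2 * exp (-(x * t)) = 2 / x ^ 3 := by
  have h := Real.integral_rpow_mul_exp_neg_mul_Ioi (a := 3) (by norm_num) hx
  have hG : Real.Gamma 3 = 2 := by
    rw [show (3:ℝ) = 2 + 1 by norm_num, Real.Gamma_add_one (by norm_num),
      show (2:ℝ) = 1 + 1 by norm_num, Real.Gamma_add_one (by norm_num), Real.Gamma_one]
    norm_num
  rw [hG] at h
  have hcong : ∫ t in Ioi (0:ℝ), t ^ 2 * exp (-(x * t))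
      = ∫ t in Ioi (0:ℝ), t ^ ((3:ℝ) - 1) * exp (-(x * t)) := by
    refine setIntegral_congr_fun measurableSet_Ioi (fun t ht => ?_)
    rw [show (3:ℝ) - 1 = 2 by norm_num, rpow_two]
  rw [hcong, h, one_div, show ((3:ℝ)) = ((3:ℕ):ℝ) by norm_num, Real.rpow_natCast,
    inv_pow, inv_mul_eq_div]

lemma aux_abs_sin5_integrable :
    IntegrableOn (fun x : ℝ => |sin x| ^ 5 * (2 / x ^ 3)) (Ioi 0) := by
  have hmeas : Measurable (fun x : ℝ => |sin x| ^ 5 * (2 / x ^ 3)) := by fun_prop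
  have h1 : IntegrableOn (fun x : ℝ => |sin x| ^ 5 * (2 / x ^ 3)) (Ioc 0 1) := by
    refine Integrable.mono' (g := fun _ => (2:ℝ))
      (integrableOn_const measure_Ioc_lt_top.ne) hmeas.aestronglyMeasurable ?_
    rw [ae_restrict_iff' measurableSet_Ioc]
    filter_upwards with x hx
    have hx0 : 0 < x := hx.1
    have hsx : |sin x| ≤ x := by
      rw [abs_of_nonneg (sin_nonneg_of_nonneg_of_le_pi hx0.le
        (hx.2.trans (by linarith [Real.pi_gt_three])))]
      exact (Real.sin_lt hx0).le
    have hnn : 0 ≤ |sin x| ^ 5 * (2 / x ^ 3) := by positivity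
    rw [Real.norm_eq_abs, abs_of_nonneg hnn]
    have key : |sin x| ^ 5 * (2 / x ^ 3) ≤ x ^ 5 * (2 / x ^ 3) := by
      gcongr
    have heq : x ^ 5 * (2 / x ^ 3) = 2 * x ^ 2 := by
      field_simp
    have hx2 : x ^ 2 ≤ 1 := by nlinarith [hx.2, hx0.le]
    nlinarith
  have h2 : IntegrableOn (fun x : ℝ => |sin x| ^ 5 * (2 / x ^ 3)) (Ioi 1) := by
    refine Integrable.mono' (g := fun x : ℝ => 2 * x ^ (-3:ℝ))
      ((integrableOn_Ioi_rpow_of_lt (by norm_num) one_pos).const_mul 2)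
      hmeas.aestronglyMeasurable ?_
    rw [ae_restrict_iff' measurableSet_Ioi]
    filter_upwards with x hx
    have hx0 : (0:ℝ) < x := lt_trans one_pos hx
    have hnn : 0 ≤ |sin x| ^ 5 * (2 / x ^ 3) := by positivity
    rw [Real.norm_eq_abs, abs_of_nonneg hnn]
    have hrw : x ^ (-3:ℝ) = (x ^ 3)⁻¹ := by
      rw [show (-3:ℝ) = -((3:ℕ):ℝ) by norm_num, Real.rpow_neg hx0.le, Real.rpow_natCast]
    rw [hrw]
    have hs1 : |sin x| ^ 5 ≤ 1 := pow_le_one₀ (abs_nonneg _) (abs_sin_le_one _)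
    calc |sin x| ^ 5 * (2 / x ^ 3) ≤ 1 * (2 / x ^ 3) := by
          gcongr
      _ = 2 * (x ^ 3)⁻¹ := by ring
  have : Ioi (0:ℝ) = Ioc 0 1 ∪ Ioi 1 := (Ioc_union_Ioi_eq_Ioi one_pos.le).symm
  rw [this]
  exact h1.union h2

set_option maxHeartbeats 1000000 in
/-- ∫₀^∞ sin⁵x/x³ dx = 5π/32. -/
theorem sin_pow_five_div_cube_integral :
    ∫ x in Set.Ioi (0:ℝ), Real.sin x ^ 5 / x ^ 3 = 5 * π / 32 := by
  set F : ℝ → ℝ → ℝ := fun x t => sin x ^ 5 * (t ^ 2 * exp (-(x * t))) with hF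
  have step1 : ∀ x ∈ Ioi (0:ℝ), sin x ^ 5 / x ^ 3 = (∫ t in Ioi (0:ℝ), F x t) / 2 := by
    intro x hx
    rw [hF]
    simp only
    rw [integral_const_mul, aux_kernel_integral hx]
    have hx3 : x ^ 3 ≠ 0 := pow_ne_zero 3 (ne_of_gt (mem_Ioi.mp hx))
    field_simp
  have hmeasF : AEStronglyMeasurable (Function.uncurry F)
      ((volume.restrict (Ioi (0:ℝ))).prod (volume.restrict (Ioi (0:ℝ)))) := by
    apply Continuous.aestronglyMeasurable
    show Continuous fun p : ℝ × ℝ => sin p.1 ^ 5 * (p.2 ^ 2 * exp (-(p.1 * p.2)))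
    fun_prop
  have hint : Integrable (Function.uncurry F)
      ((volume.restrict (Ioi (0:ℝ))).prod (volume.restrict (Ioi (0:ℝ)))) := by
    rw [integrable_prod_iff hmeasF]
    constructor
    · rw [ae_restrict_iff' measurableSet_Ioi]
      filter_upwards with x hx
      have he : (fun y => Function.uncurry F (x, y))
          = fun t : ℝ => sin x ^ 5 * (t ^ 2 * exp (-(x * t))) := rfl
      rw [he]
      exact (aux_kernel_integrable hx).const_mul _
    · refine aux_abs_sin5_integrable.congr ?_
      rw [Filter.EventuallyEq, ae_restrict_iff' measurableSet_Ioi]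
      filter_upwards with x hx
      have : ∀ t : ℝ, ‖Function.uncurry F (x, t)‖ = |sin x| ^ 5 * (t ^ 2 * exp (-(x * t))) := by
        intro t
        rw [Function.uncurry, hF]
        simp only
        rw [Real.norm_eq_abs, abs_mul, abs_pow, abs_of_nonneg (by positivity : (0:ℝ) ≤ t ^ 2 * exp (-(x * t)))]
      simp only [this]
      rw [integral_const_mul, aux_kernel_integral hx]
  calc ∫ x in Ioi (0:ℝ), sin x ^ 5 / x ^ 3
      = ∫ x in Ioi (0:ℝ), (∫ t in Ioi (0:ℝ), F x t) / 2 :=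
        setIntegral_congr_fun measurableSet_Ioi step1
    _ = (∫ x in Ioi (0:ℝ), ∫ t in Ioi (0:ℝ), F x t) / 2 := integral_div _ _
    _ = (∫ t in Ioi (0:ℝ), ∫ x in Ioi (0:ℝ), F x t) / 2 := by
        rw [integral_integral_swap hint]
    _ = (∫ t in Ioi (0:ℝ),
          t ^ 2 * ((10 / (t ^ 2 + 1) - 15 / (t ^ 2 + 9) + 5 / (t ^ 2 + 25)) / 16)) / 2 := by
        congr 1
        refine setIntegral_congr_fun measurableSet_Ioi (fun t ht => ?_)
        have h1 : ∀ x : ℝ, F x t = t ^ 2 * (exp (-(t * x)) * sin x ^ 5) := by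
          intro x
          rw [hF]
          simp only
          rw [mul_comm x t]
          ring
        simp only [h1]
        rw [integral_const_mul, aux_exp_sin5_integral ht]
    _ = 5 * π / 32 := by
        have hc : ∀ t ∈ Ioi (0:ℝ),
            t ^ 2 * ((10 / (t ^ 2 + 1) - 15 / (t ^ 2 + 9) + 5 / (t ^ 2 + 25)) / 16)
              = (135 * ((3:ℝ) ^ 2 + t ^ 2)⁻¹ - 10 * ((1:ℝ) ^ 2 + t ^ 2)⁻¹
                  - 125 * ((5:ℝ) ^ 2 + t ^ 2)⁻¹) / 16 := by
          intro t _
          have p1 : (0:ℝ) < t ^ 2 + 1 := by positivity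
          have p9 : (0:ℝ) < t ^ 2 + 9 := by positivity
          have p25 : (0:ℝ) < t ^ 2 + 25 := by positivity
          field_simp
          ring
        rw [setIntegral_congr_fun measurableSet_Ioi hc]
        have i3 := (aux_inv_sq_add_integrable (by norm_num : (0:ℝ) < 3)).const_mul 135
        have i1 := (aux_inv_sq_add_integrable (by norm_num : (0:ℝ) < 1)).const_mul 10
        have i5 := (aux_inv_sq_add_integrable (by norm_num : (0:ℝ) < 5)).const_mul 125
        have hsub : IntegrableOn (fun t : ℝ => 135 * ((3:ℝ) ^ 2 + t ^ 2)⁻¹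
            - 10 * ((1:ℝ) ^ 2 + t ^ 2)⁻¹) (Ioi 0) := i3.sub i1
        rw [integral_div, integral_sub hsub i5, integral_sub i3 i1,
          integral_const_mul, integral_const_mul, integral_const_mul,
          aux_inv_sq_add_integral (by norm_num : (0:ℝ) < 3),
          aux_inv_sq_add_integral (by norm_num : (0:ℝ) < 1),
          aux_inv_sq_add_integral (by norm_num : (0:ℝ) < 5)]
        ring
end
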